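/- Let M be a left Sym V-comodule with coaction m ↦ m₍₋₁₎ ⊗ m₍₀₎. Then the map ρ : M → M ⊗ V defined by ρ(m) = − m₍₀₎ ⊗ pr_V(m₍₋₁₎) is a Lie coaction of V on M, i.e. the image of (ρ ⊗ id_V)∘ρ lies in M ⊗ Sym² V (the symmetric part of M ⊗ V ⊗ V). -/

import Mathlib

open TensorProduct

/-! ### The symmetric algebra of a module

Mathlib does not yet have the symmetric algebra, so we construct it as the
quotient of the tensor algebra by the commutativity relation. -/

/-- The relation on the tensor algebra whose quotient is the symmetric algebra. -/
inductive SymRel (R : Type*) [CommRing R] (V : Type*) [AddCommGroup V] [Module R V] :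
    TensorAlgebra R V → TensorAlgebra R V → Prop
  | mul_comm (a b : TensorAlgebra R V) : SymRel R V (a * b) (b * a)

/-- The symmetric algebra `Sym V` of an `R`-module `V`. -/
abbrev SymmAlg (R : Type*) [CommRing R] (V : Type*) [AddCommGroup V] [Module R V] : Type _ :=
  RingQuot (SymRel R V)

variable (R : Type*) [CommRing R] (V : Type*) [AddCommGroup V] [Module R V]

noncomputable instance : CommRing (SymmAlg R V) :=
  { (inferInstanceAs (Ring (RingQuot (SymRel R V))) : Ring (RingQuot (SymRel R V))) with
    mul_comm := by
      intro a b
      obtain ⟨x, rfl⟩ := RingQuot.mkRingHom_surjective (SymRel R V) a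
      obtain ⟨y, rfl⟩ := RingQuot.mkRingHom_surjective (SymRel R V) b
      rw [← map_mul, ← map_mul, RingQuot.mkRingHom_rel (SymRel.mul_comm x y)] }

/-- The canonical inclusion `V →ₗ Sym V` of the generators. -/
noncomputable def ιS : V →ₗ[R] SymmAlg R V :=
  (RingQuot.mkAlgHom R (SymRel R V)).toLinearMap ∘ₗ TensorAlgebra.ι R

section Aux

variable {R : Type*} [CommRing R] {V : Type*} [AddCommGroup V] [Module R V]

/-- `Sym V` is generated as an algebra by the image of `V`. -/
lemma adjoin_range_ιS : Algebra.adjoin R (Set.range (ιS R V)) = ⊤ := by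
  rw [eq_top_iff]
  rintro z -
  obtain ⟨x, rfl⟩ := RingQuot.mkAlgHom_surjective R (SymRel R V) z
  induction x using TensorAlgebra.induction with
  | algebraMap r =>
      rw [AlgHom.commutes]
      exact Subalgebra.algebraMap_mem _ r
  | ι v => exact Algebra.subset_adjoin ⟨v, rfl⟩
  | mul a b ha hb => rw [map_mul]; exact mul_mem ha hb
  | add a b ha hb => rw [map_add]; exact add_mem ha hb

/-- Any algebra map out of `Sym V` with primitive-type generators: cocommutativity of `Δ`. -/
lemma symmAlg_cocomm (Δ : SymmAlg R V →ₐ[R] SymmAlg R V ⊗[R] SymmAlg R V)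
    (hΔ : ∀ v : V, Δ (ιS R V v) = 1 ⊗ₜ[R] ιS R V v + ιS R V v ⊗ₜ[R] 1)
    (z : SymmAlg R V) :
    (TensorProduct.comm R (SymmAlg R V) (SymmAlg R V)) (Δ z) = Δ z := by
  have key : (Algebra.TensorProduct.comm R (SymmAlg R V) (SymmAlg R V)).toAlgHom.comp Δ = Δ := by
    have hle : Algebra.adjoin R (Set.range (ιS R V)) ≤
        AlgHom.equalizer ((Algebra.TensorProduct.comm R (SymmAlg R V)
          (SymmAlg R V)).toAlgHom.comp Δ) Δ := by
      apply Algebra.adjoin_le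
      rintro _ ⟨v, rfl⟩
      show (Algebra.TensorProduct.comm R (SymmAlg R V) (SymmAlg R V)) (Δ (ιS R V v))
        = Δ (ιS R V v)
      rw [hΔ v, map_add, Algebra.TensorProduct.comm_tmul, Algebra.TensorProduct.comm_tmul,
        add_comm]
    rw [adjoin_range_ιS] at hle
    ext z
    exact hle (Algebra.mem_top (R := R) (A := SymmAlg R V))
  have := congrArg (fun φ : SymmAlg R V →ₐ[R] SymmAlg R V ⊗[R] SymmAlg R V => φ z) key
  simp at this
  exact this

/-- `TensorProduct.map` is negated when the left map is negated. -/
lemma TensorProduct.map_neg_left {M N P Q : Type*} [AddCommGroup M] [AddCommGroup N]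
    [AddCommGroup P] [AddCommGroup Q] [Module R M] [Module R N] [Module R P] [Module R Q]
    (f : M →ₗ[R] N) (g : P →ₗ[R] Q) :
    TensorProduct.map (-f) g = -TensorProduct.map f g := by
  ext m p
  simp [TensorProduct.neg_tmul]

end Aux

/-- **The infinitesimal Lie coaction of a `Sym V`-comodule.**
Let `M` be a left `Sym V`-comodule, with coassociative counital coaction
`L(m) = m₍₋₁₎ ⊗ m₍₀₎` (relative to the shuffle coproduct `Δ` and its counit `ε`),
and let `pr_V : Sym V → V` be the projection onto symmetric degree one.  Then
`ρ : M → M ⊗ V`, `ρ(m) = − m₍₀₎ ⊗ pr_V(m₍₋₁₎)`, is a Lie coaction of the abelian Lie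
coalgebra `V` on `M`: the image of `(ρ ⊗ id_V) ∘ ρ` lies in `M ⊗ Sym² V`, i.e. it is
invariant under the flip of the last two tensor factors. -/
theorem infinitesimal_lie_coaction
    {R : Type*} [CommRing R] [Algebra ℚ R]
    {V : Type*} [AddCommGroup V] [Module R V]
    {M : Type*} [AddCommGroup M] [Module R M]
    (Δ : SymmAlg R V →ₐ[R] SymmAlg R V ⊗[R] SymmAlg R V)
    (hΔ : ∀ v : V, Δ (ιS R V v) = 1 ⊗ₜ[R] ιS R V v + ιS R V v ⊗ₜ[R] 1)
    (ε : SymmAlg R V →ₐ[R] R) (hε : ∀ v : V, ε (ιS R V v) = 0)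
    (prV : SymmAlg R V →ₗ[R] V)
    (hprV1 : ∀ v : V, prV (ιS R V v) = v)
    (hprV0 : ∀ (s : ℕ) (x : Fin s → V), s ≠ 1 → prV (∏ j, ιS R V (x j)) = 0)
    (L : M →ₗ[R] SymmAlg R V ⊗[R] M)
    (hL1 : (TensorProduct.assoc R (SymmAlg R V) (SymmAlg R V) M).toLinearMap
        ∘ₗ TensorProduct.map Δ.toLinearMap LinearMap.id ∘ₗ L
      = TensorProduct.map LinearMap.id L ∘ₗ L)
    (hL2 : (TensorProduct.lid R M).toLinearMap
        ∘ₗ TensorProduct.map ε.toLinearMap LinearMap.id ∘ₗ L = LinearMap.id)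
    (ρ : M →ₗ[R] M ⊗[R] V)
    (hρ : ρ = -((TensorProduct.comm R V M).toLinearMap
        ∘ₗ TensorProduct.map prV LinearMap.id ∘ₗ L)) :
    TensorProduct.map (LinearMap.id : M →ₗ[R] M) (TensorProduct.comm R V V).toLinearMap
        ∘ₗ ((TensorProduct.assoc R M V V).toLinearMap
            ∘ₗ TensorProduct.map ρ LinearMap.id ∘ₗ ρ)
      = (TensorProduct.assoc R M V V).toLinearMap
          ∘ₗ TensorProduct.map ρ LinearMap.id ∘ₗ ρ := by
  classical
  set f : M →ₗ[R] M ⊗[R] V :=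
    (TensorProduct.comm R V M).toLinearMap ∘ₗ TensorProduct.map prV LinearMap.id ∘ₗ L with hf
  have hmap : TensorProduct.map ρ (LinearMap.id : V →ₗ[R] V) ∘ₗ ρ
      = TensorProduct.map f LinearMap.id ∘ₗ f := by
    rw [hρ, TensorProduct.map_neg_left]
    ext m
    simp
  rw [hmap]
  -- the auxiliary map `Ψ : s ⊗ (t ⊗ n) ↦ n ⊗ (prV t ⊗ prV s)`
  set Ψ : SymmAlg R V ⊗[R] (SymmAlg R V ⊗[R] M) →ₗ[R] M ⊗[R] (V ⊗[R] V) :=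
    (TensorProduct.assoc R M V V).toLinearMap
      ∘ₗ (TensorProduct.comm R V (M ⊗[R] V)).toLinearMap
      ∘ₗ TensorProduct.map prV
          ((TensorProduct.comm R V M).toLinearMap ∘ₗ TensorProduct.map prV LinearMap.id)
    with hΨ
  have hfapp : ∀ m : M, f m = (TensorProduct.comm R V M)
      ((TensorProduct.map prV LinearMap.id) (L m)) := by
    intro m; rw [hf]; rfl
  -- Claim 1: the double coaction composed with projections, in terms of `Ψ`.
  have hA : ∀ w : SymmAlg R V ⊗[R] M,
      (TensorProduct.assoc R M V V) ((TensorProduct.map f LinearMap.id)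
        ((TensorProduct.comm R V M) ((TensorProduct.map prV LinearMap.id) w)))
      = Ψ ((TensorProduct.map LinearMap.id L) w) := by
    intro w
    induction w using TensorProduct.induction_on with
    | zero => simp
    | add a b ha hb => simp only [map_add, ha, hb]
    | tmul s m =>
        simp only [TensorProduct.map_tmul, LinearMap.id_coe, id_eq,
          TensorProduct.comm_tmul, hfapp]
        induction L m using TensorProduct.induction_on with
        | zero => simp
        | add a b ha hb => simp only [map_add, TensorProduct.add_tmul,
            TensorProduct.tmul_add, ha, hb]
        | tmul t n =>
            simp [hΨ, TensorProduct.map_tmul, TensorProduct.comm_tmul,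
              TensorProduct.assoc_tmul]
  -- Claim 2: `Ψ ∘ assoc` on `d ⊗ m`.
  have hC : ∀ (d : SymmAlg R V ⊗[R] SymmAlg R V) (m : M),
      Ψ ((TensorProduct.assoc R (SymmAlg R V) (SymmAlg R V) M) (d ⊗ₜ[R] m))
      = m ⊗ₜ[R] ((TensorProduct.comm R V V) ((TensorProduct.map prV prV) d)) := by
    intro d m
    induction d using TensorProduct.induction_on with
    | zero => simp
    | add a b ha hb => simp only [map_add, TensorProduct.add_tmul,
        TensorProduct.tmul_add, ha, hb]
    | tmul s₁ s₂ =>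
        simp [hΨ, TensorProduct.map_tmul, TensorProduct.comm_tmul,
          TensorProduct.assoc_tmul]
  -- naturality of the flip w.r.t. `prV ⊗ prV`
  have hnatural : ∀ d : SymmAlg R V ⊗[R] SymmAlg R V,
      (TensorProduct.comm R V V) ((TensorProduct.map prV prV) d)
      = (TensorProduct.map prV prV)
          ((TensorProduct.comm R (SymmAlg R V) (SymmAlg R V)) d) := by
    intro d
    induction d using TensorProduct.induction_on with
    | zero => simp
    | add a b ha hb => simp only [map_add, ha, hb]
    | tmul s₁ s₂ => simp [TensorProduct.comm_tmul, TensorProduct.map_tmul]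
  have hflip : ∀ s : SymmAlg R V,
      (TensorProduct.comm R V V) ((TensorProduct.map prV prV) (Δ s))
      = (TensorProduct.map prV prV) (Δ s) := by
    intro s
    rw [hnatural, symmAlg_cocomm Δ hΔ]
  -- now prove the theorem pointwise
  ext m
  simp only [LinearMap.comp_apply, LinearEquiv.coe_coe]
  have e1 := hA (L m)
  rw [← hfapp] at e1
  have e2 := LinearMap.congr_fun hL1 m
  simp only [LinearMap.comp_apply, LinearEquiv.coe_coe] at e2
  rw [e1, ← e2]
  -- remaining goal about `Ψ (assoc (map Δ id (L m)))`
  induction L m using TensorProduct.induction_on with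
  | zero => simp
  | add a b ha hb => simp only [map_add, ha, hb]
  | tmul s m₀ =>
      simp only [TensorProduct.map_tmul, LinearMap.id_coe, id_eq, AlgHom.toLinearMap_apply]
      rw [hC, TensorProduct.map_tmul]
      simp [hflip]
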